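/- Let s > 2 and suppose G acts faithfully and transitively on a finite set X of size n with n ≠ s². Then all orbits of the translation subgroup T on X have a common size k > 1, the number m of T-orbits satisfies n = k·m with m > 1, there exist positive integers a and b with s = lcm(a, b) and k = a·b, and m·s² divides the order of G. -/

import Mathlib

lemma pow_val_add' {G : Type*} [Group G] {e : ℕ} [NeZero e] (g : G) (h : g ^ e = 1) (x y : ZMod e) :
    g ^ (x + y).val = g ^ x.val * g ^ y.val := by
  rw [← pow_add, pow_eq_pow_mod (x.val + y.val) h, ZMod.val_add]

lemma closure_two_comm_card_le {G : Type*} [Group G] (u v : G) (d e : ℕ) (hd : 0 < d) (he : 0 < e)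
    (hc : Commute u v) (hud : u ^ d = 1) (hve : v ^ e = 1) :
    Nat.card (Subgroup.closure ({u, v} : Set G)) ≤ d * e := by
  haveI : NeZero d := ⟨hd.ne'⟩
  haveI : NeZero e := ⟨he.ne'⟩
  set f : ZMod d × ZMod e → G := fun p => u ^ p.1.val * v ^ p.2.val with hf
  have hmulf : ∀ p q, f p * f q = u ^ (p.1.val + q.1.val) * v ^ (p.2.val + q.2.val) := by
    intro p q
    simp only [hf]
    have hcom : Commute (v ^ p.2.val) (u ^ q.1.val) := hc.symm.pow_pow _ _
    rw [mul_assoc, ← mul_assoc (v ^ p.2.val), hcom.eq, pow_add, pow_add]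
    group
  let H : Subgroup G :=
    { carrier := Set.range f
      one_mem' := ⟨(0, 0), by simp [hf]⟩
      mul_mem' := by
        rintro _ _ ⟨p, rfl⟩ ⟨q, rfl⟩
        exact ⟨(p.1 + q.1, p.2 + q.2), by
          rw [hmulf]
          simp only [hf]
          rw [pow_val_add' u hud, pow_val_add' v hve, pow_add, pow_add]⟩
      inv_mem' := by
        rintro _ ⟨p, rfl⟩
        refine ⟨(-p.1, -p.2), eq_inv_of_mul_eq_one_left ?_⟩
        rw [hmulf, pow_add, pow_add, ← pow_val_add' u hud, ← pow_val_add' v hve,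
          neg_add_cancel, neg_add_cancel]
        simp }
  have hu_mem : u ∈ H := by
    refine ⟨(1, 0), ?_⟩
    show u ^ (1 : ZMod d).val * v ^ (0 : ZMod e).val = u
    rw [ZMod.val_zero, pow_zero, mul_one, ZMod.val_one_eq_one_mod,
      ← pow_eq_pow_mod 1 hud, pow_one]
  have hv_mem : v ∈ H := by
    refine ⟨(0, 1), ?_⟩
    show u ^ (0 : ZMod d).val * v ^ (1 : ZMod e).val = v
    rw [ZMod.val_zero, pow_zero, one_mul, ZMod.val_one_eq_one_mod,
      ← pow_eq_pow_mod 1 hve, pow_one]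
  have hle : Subgroup.closure ({u, v} : Set G) ≤ H := by
    rw [Subgroup.closure_le]
    rintro x (rfl | rfl)
    exacts [hu_mem, hv_mem]
  haveI : Finite H := (Set.finite_range f).to_subtype
  calc Nat.card (Subgroup.closure ({u, v} : Set G)) ≤ Nat.card H :=
        Subgroup.card_le_of_le hle
    _ ≤ Nat.card (ZMod d × ZMod e) :=
        Nat.card_le_card_of_surjective _ Set.rangeFactorization_surjective
    _ = d * e := by rw [Nat.card_prod, Nat.card_zmod, Nat.card_zmod]

lemma dihedral_card_le {Q : Type*} [Group Q] (a c : Q) (ha : a * a = 1) (hc : c ^ 4 = 1)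
    (hconj : a * c * a⁻¹ = c⁻¹) :
    ∃ H : Subgroup Q, a ∈ H ∧ c ∈ H ∧ Nat.card H ≤ 8 := by
  have ha2 : a ^ 2 = 1 := by rw [pow_two]; exact ha
  have hc3 : c⁻¹ = c ^ 3 := by
    apply inv_eq_of_mul_eq_one_right
    rw [← pow_succ']; exact hc
  have hswap : ∀ t : ℕ, a * c ^ t = c ^ (3 * t) * a := by
    intro t
    have h1 : a * c ^ t * a⁻¹ = c ^ (3 * t) := by
      rw [← conj_pow, hconj, hc3, ← pow_mul]
    rw [mul_inv_eq_iff_eq_mul] at h1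
    exact h1
  have hswapw : ∀ (t : ℕ) (w : Q), a * (c ^ t * w) = c ^ (3 * t) * (a * w) := by
    intro t w; rw [← mul_assoc, hswap, mul_assoc]
  have h3mul : ∀ k : ZMod 4, c ^ ((3 * k : ZMod 4)).val = c ^ (3 * k.val) := by
    intro k
    rw [pow_eq_pow_mod (3 * k.val) hc, ZMod.val_mul]
    rfl
  set f : ZMod 4 × ZMod 2 → Q := fun p => c ^ p.1.val * a ^ p.2.val with hf
  have hval2 : ∀ j : ZMod 2, j.val = 0 ∨ j.val = 1 := by
    intro j; have := ZMod.val_lt j; omega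
  let H : Subgroup Q :=
    { carrier := Set.range f
      one_mem' := ⟨(0, 0), by simp [hf]⟩
      mul_mem' := by
        rintro _ _ ⟨p, rfl⟩ ⟨q, rfl⟩
        rcases hval2 p.2 with h0 | h1
        · refine ⟨(p.1 + q.1, q.2), ?_⟩
          simp only [hf, h0, pow_zero, mul_one]
          rw [pow_val_add' c hc, mul_assoc]
        · refine ⟨(p.1 + 3 * q.1, p.2 + q.2), ?_⟩
          simp only [hf, h1, pow_one]
          rw [pow_val_add' c hc, h3mul, pow_val_add' a ha2, h1, pow_one]
          simp only [mul_assoc, hswapw]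
      inv_mem' := by
        rintro _ ⟨p, rfl⟩
        rcases hval2 p.2 with h0 | h1
        · refine ⟨(3 * p.1, p.2), ?_⟩
          simp only [hf, h0, pow_zero, mul_one, h3mul]
          rw [pow_mul, ← hc3, inv_pow]
        · refine ⟨p, eq_inv_of_mul_eq_one_left ?_⟩
          simp only [hf, h1, pow_one, mul_assoc, hswapw]
          rw [ha, mul_one, ← pow_add]
          have : p.1.val + 3 * p.1.val = 4 * p.1.val := by ring
          rw [this, pow_mul, hc, one_pow] }
  refine ⟨H, ⟨(0, 1), ?_⟩, ⟨(1, 0), ?_⟩, ?_⟩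
  · show c ^ (0 : ZMod 4).val * a ^ (1 : ZMod 2).val = a
    rw [show (1 : ZMod 2).val = 1 from rfl, ZMod.val_zero, pow_zero, one_mul, pow_one]
  · show c ^ (1 : ZMod 4).val * a ^ (0 : ZMod 2).val = c
    rw [show (1 : ZMod 4).val = 1 from rfl, ZMod.val_zero, pow_zero, mul_one, pow_one]
  · haveI : Finite H := (Set.finite_range f).to_subtype
    calc Nat.card H ≤ Nat.card (ZMod 4 × ZMod 2) :=
          Nat.card_le_card_of_surjective _ Set.rangeFactorization_surjective
      _ = 8 := by rw [Nat.card_prod, Nat.card_zmod, Nat.card_zmod]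

lemma sigma_card_const {ι : Type*} [Finite ι] (f : ι → Type*) [∀ i, Finite (f i)] (k : ℕ)
    (h : ∀ i, Nat.card (f i) = k) : Nat.card (Σ i, f i) = k * Nat.card ι := by
  classical
  letI := Fintype.ofFinite ι
  letI := fun i => Fintype.ofFinite (f i)
  rw [Nat.card_eq_fintype_card, Fintype.card_sigma]
  have : ∀ i, Fintype.card (f i) = k := by
    intro i; rw [← Nat.card_eq_fintype_card, h]
  simp only [this, Finset.sum_const, smul_eq_mul, Nat.card_eq_fintype_card]
  rw [mul_comm, Finset.card_univ]

theorem stmt4 (s : ℕ) (hs : 2 < s)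
    (G : Type*) [Group G] [Finite G] (ρ0 ρ1 ρ2 : G)
    (hgen : Subgroup.closure {ρ0, ρ1, ρ2} = ⊤)
    (hr0 : ρ0 ^ 2 = 1) (hr1 : ρ1 ^ 2 = 1) (hr2 : ρ2 ^ 2 = 1)
    (h01 : (ρ0 * ρ1) ^ 4 = 1) (h12 : (ρ1 * ρ2) ^ 4 = 1) (h02 : (ρ0 * ρ2) ^ 2 = 1)
    (hmap : (ρ0 * ρ1 * ρ2 * ρ1) ^ s = 1)
    (hG : Nat.card G = 8 * s ^ 2)
    (u v : G) (hu : u = ρ0 * ρ1 * ρ2 * ρ1) (hv : v = ρ1 * u * ρ1)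
    (T : Subgroup G) (hT : T = Subgroup.closure {u, v})
    (X : Type*) [Finite X] [MulAction G X]
    (hfaith : ∀ a : G, (∀ x : X, a • x = x) → a = 1)
    (htrans : ∀ x y : X, ∃ a : G, a • x = y)
    (n : ℕ) (hn : Nat.card X = n)
    (hns : n ≠ s ^ 2) :
    ∃ k m a b : ℕ, 1 < k ∧ 1 < m ∧
      (∀ x : X, Nat.card (MulAction.orbit T x) = k) ∧
      Nat.card (MulAction.orbitRel.Quotient T X) = m ∧
      n = k * m ∧
      0 < a ∧ 0 < b ∧ s = Nat.lcm a b ∧ k = a * b ∧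
      m * s ^ 2 ∣ Nat.card G := by
  classical
  have hs0 : 0 < s := by omega
  -- basic involution facts
  have m0 : ρ0 * ρ0 = 1 := by rw [← pow_two]; exact hr0
  have m1 : ρ1 * ρ1 = 1 := by rw [← pow_two]; exact hr1
  have m2 : ρ2 * ρ2 = 1 := by rw [← pow_two]; exact hr2
  have i0 : ρ0⁻¹ = ρ0 := inv_eq_of_mul_eq_one_right m0
  have i1 : ρ1⁻¹ = ρ1 := inv_eq_of_mul_eq_one_right m1
  have i2 : ρ2⁻¹ = ρ2 := inv_eq_of_mul_eq_one_right m2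
  have w0 : ∀ w : G, ρ0 * (ρ0 * w) = w := fun w => by rw [← mul_assoc, m0, one_mul]
  have w1 : ∀ w : G, ρ1 * (ρ1 * w) = w := fun w => by rw [← mul_assoc, m1, one_mul]
  have w2 : ∀ w : G, ρ2 * (ρ2 * w) = w := fun w => by rw [← mul_assoc, m2, one_mul]
  have c02 : ρ0 * ρ2 = ρ2 * ρ0 := by
    have h := h02
    rw [pow_two] at h
    have h' : ρ0 * ρ2 = (ρ0 * ρ2)⁻¹ := eq_inv_of_mul_eq_one_left h
    rwa [mul_inv_rev, i0, i2] at h'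
  have c02w : ∀ w : G, ρ2 * (ρ0 * w) = ρ0 * (ρ2 * w) := fun w => by
    rw [← mul_assoc, ← c02, mul_assoc]
  have braid : ∀ a b : G, a * a = 1 → b * b = 1 → (a * b) ^ 4 = 1 →
      a * (b * (a * b)) = b * (a * (b * a)) := by
    intro a b haa hbb h4
    have ia : a⁻¹ = a := inv_eq_of_mul_eq_one_right haa
    have ib : b⁻¹ = b := inv_eq_of_mul_eq_one_right hbb
    have h4' : (a * b) ^ 2 * (a * b) ^ 2 = 1 := by
      rw [← pow_add]; exact h4
    have h2 : (a * b) ^ 2 = ((a * b) ^ 2)⁻¹ := eq_inv_of_mul_eq_one_left h4'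
    rw [pow_two, mul_inv_rev, mul_inv_rev, ia, ib] at h2
    simp only [mul_assoc] at h2
    exact h2
  have b01 := braid ρ0 ρ1 m0 m1 h01
  have b12 := braid ρ1 ρ2 m1 m2 h12
  have b01w : ∀ w : G, ρ0 * (ρ1 * (ρ0 * (ρ1 * w))) = ρ1 * (ρ0 * (ρ1 * (ρ0 * w))) := by
    intro w
    have h := congrArg (fun x => x * w) b01
    simpa only [mul_assoc] using h
  have b12w : ∀ w : G, ρ1 * (ρ2 * (ρ1 * (ρ2 * w))) = ρ2 * (ρ1 * (ρ2 * (ρ1 * w))) := by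
    intro w
    have h := congrArg (fun x => x * w) b12
    simpa only [mul_assoc] using h
  -- v in reduced form
  have hv4 : v = ρ1 * (ρ0 * (ρ1 * ρ2)) := by
    rw [hv, hu]
    simp only [mul_assoc, w1, m1, mul_one]
  -- u and v commute
  have comm_uv : Commute u v := by
    show u * v = v * u
    rw [hu, hv4]
    simp only [mul_assoc, w1, m1, mul_one]
    simp only [c02w]
    rw [← b01w, b12w]
    simp only [w1, m1, mul_one]
  -- conjugation facts
  have conj0u : ρ0 * u * ρ0⁻¹ = u⁻¹ := by
    rw [i0, hu]
    simp only [mul_inv_rev, i0, i1, i2, mul_assoc, w0]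
  have conj1u : ρ1 * u * ρ1⁻¹ = v := by rw [i1, hv, mul_assoc]
  have conj2u : ρ2 * u * ρ2⁻¹ = u := by
    rw [i2, hu]
    simp only [mul_assoc]
    simp only [c02w]
    rw [← b12w]
    simp only [w2, m2, mul_one]
  have conj0v : ρ0 * v * ρ0⁻¹ = v := by
    rw [i0, hv4]
    simp only [mul_assoc, ← c02]
    rw [b01w]
    simp only [w0, m0, mul_one]
  have conj1v : ρ1 * v * ρ1⁻¹ = u := by
    rw [i1, hv]
    simp only [mul_assoc, w1, m1, mul_one]
  have conj2v : ρ2 * v * ρ2⁻¹ = v⁻¹ := by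
    rw [i2, hv4]
    simp only [mul_inv_rev, i0, i1, i2, mul_assoc, w2, m2, mul_one]
  -- membership of u, v in T
  have huT : u ∈ T := by rw [hT]; exact Subgroup.subset_closure (Or.inl rfl)
  have hvT : v ∈ T := by rw [hT]; exact Subgroup.subset_closure (Or.inr rfl)
  -- T is normal
  have hnormalizer : ∀ g : G, g * g = 1 → g * u * g⁻¹ ∈ T → g * v * g⁻¹ ∈ T →
      g ∈ Subgroup.normalizer (T : Set G) := by
    intro g hg h1 h2
    have hginv : g⁻¹ = g := inv_eq_of_mul_eq_one_right hg
    have hmap : Subgroup.map (MulAut.conj g).toMonoidHom T ≤ T := by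
      rw [hT, MonoidHom.map_closure]
      apply (Subgroup.closure_le _).2
      rintro x ⟨y, (rfl | rfl), rfl⟩
      · simpa [MulAut.conj_apply] using (hT ▸ h1)
      · simpa [MulAut.conj_apply] using (hT ▸ h2)
    rw [Subgroup.mem_normalizer_iff]
    intro h
    constructor
    · intro hh
      exact hmap ⟨h, hh, rfl⟩
    · intro hh
      have hrw : h = g * (g * h * g⁻¹) * g⁻¹ := by
        rw [hginv]
        simp only [← mul_assoc]
        rw [hg, one_mul, mul_assoc, hg, mul_one]
      rw [hrw]
      exact hmap ⟨g * h * g⁻¹, hh, rfl⟩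
  have hnorm : T.Normal := by
    rw [← Subgroup.normalizer_eq_top_iff, eq_top_iff, ← hgen, Subgroup.closure_le]
    rintro x (rfl | rfl | rfl)
    · exact hnormalizer _ m0 (by rw [conj0u]; exact inv_mem huT) (by rw [conj0v]; exact hvT)
    · exact hnormalizer _ m1 (by rw [conj1u]; exact hvT) (by rw [conj1v]; exact huT)
    · exact hnormalizer _ m2 (by rw [conj2u]; exact huT) (by rw [conj2v]; exact inv_mem hvT)
  haveI := hnorm
  -- powers of u and v
  have hus : u ^ s = 1 := by rw [hu]; exact hmap
  have hvs : v ^ s = 1 := by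
    have : v = ρ1 * u * ρ1⁻¹ := by rw [i1]; exact hv
    rw [this, conj_pow, hus, mul_one, mul_inv_cancel]
  -- card T ≤ s^2
  have cardT_le : Nat.card T ≤ s * s := by
    rw [hT]
    exact closure_two_comm_card_le u v s s hs0 hs0 comm_uv hus hvs
  -- index of T ≤ 8
  have hidx : T.index ≤ 8 := by
    set Q := G ⧸ T
    set mk : G →* Q := QuotientGroup.mk' T with hmk
    have hsurj : Function.Surjective mk := QuotientGroup.mk'_surjective T
    set a : Q := mk ρ0
    set b : Q := mk ρ1
    set c2 : Q := mk ρ2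
    have haa : a * a = 1 := by rw [← map_mul, m0, map_one]
    have hbb : b * b = 1 := by rw [← map_mul, m1, map_one]
    have hc4 : (a * b) ^ 4 = 1 := by rw [← map_mul, ← map_pow, h01, map_one]
    have hia : a⁻¹ = a := inv_eq_of_mul_eq_one_right haa
    have hib : b⁻¹ = b := inv_eq_of_mul_eq_one_right hbb
    have hconj : a * (a * b) * a⁻¹ = (a * b)⁻¹ := by
      rw [hia, mul_inv_rev, hia, hib]
      simp only [← mul_assoc]
      rw [haa, one_mul]
    have hc2 : c2 = b * a * b := by
      have hu1 : mk u = 1 := (QuotientGroup.eq_one_iff u).2 huT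
      rw [hu] at hu1
      simp only [map_mul] at hu1
      have h' : c2 = (a * b)⁻¹ * (a * b * c2 * b) * b⁻¹ := by group
      rw [hu1, mul_one, mul_inv_rev, hia, hib] at h'
      rw [h']
    obtain ⟨H, haH, hcH, hcard⟩ := dihedral_card_le a (a * b) haa hc4 hconj
    have hbH : b ∈ H := by
      have : b = a * (a * b) := by rw [← mul_assoc, haa, one_mul]
      rw [this]
      exact mul_mem haH hcH
    have htop : (⊤ : Subgroup Q) ≤ H := by
      rw [← Subgroup.map_top_of_surjective mk hsurj, ← hgen, MonoidHom.map_closure,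
        Subgroup.closure_le]
      rintro x ⟨y, (rfl | rfl | rfl), rfl⟩
      · exact haH
      · exact hbH
      · show c2 ∈ H
        rw [hc2]
        exact mul_mem (mul_mem hbH haH) hbH
    have hHtop : H = ⊤ := eq_top_iff.2 htop
    have : Nat.card Q = Nat.card H := by rw [hHtop, Subgroup.card_top]
    show Nat.card (G ⧸ T) ≤ 8
    rw [show Nat.card (G ⧸ T) = Nat.card Q from rfl, this]
    exact hcard
  -- card T = s * s
  have cardT : Nat.card T = s * s := by
    have h1 : Nat.card T * T.index = Nat.card G := T.card_mul_index
    rw [hG] at h1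
    have h2 : 8 * s ^ 2 ≤ Nat.card T * 8 := by
      rw [← h1]
      exact Nat.mul_le_mul_left _ hidx
    have h3 : s * s ≤ Nat.card T := by
      have h4 : (s * s) * 8 ≤ Nat.card T * 8 := by
        calc (s * s) * 8 = 8 * s ^ 2 := by ring
          _ ≤ Nat.card T * 8 := h2
      exact Nat.le_of_mul_le_mul_right h4 (by norm_num)
    exact le_antisymm cardT_le h3
  -- orderOf u = s
  have hordu : orderOf u = s := by
    have hd : orderOf u ∣ s := orderOf_dvd_of_pow_eq_one hus
    have hdpos : 0 < orderOf u := orderOf_pos u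
    have hle2 : Nat.card T ≤ orderOf u * s := by
      rw [hT]
      exact closure_two_comm_card_le u v _ s hdpos hs0 comm_uv (pow_orderOf_eq_one u) hvs
    rw [cardT] at hle2
    have hge : s ≤ orderOf u := Nat.le_of_mul_le_mul_right hle2 hs0
    exact le_antisymm (Nat.le_of_dvd hs0 hd) hge
  -- all elements of T commute
  have commT : ∀ a b : G, a ∈ T → b ∈ T → a * b = b * a := by
    intro x y hx hy
    rw [hT] at hx hy
    have : Commute x y := by
      refine Subgroup.closure_induction₂ ?_ ?_ ?_ ?_ ?_ ?_ ?_ hx hy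
      · rintro a b (rfl | rfl) (rfl | rfl)
        · exact Commute.refl _
        · exact comm_uv
        · exact comm_uv.symm
        · exact Commute.refl _
      · exact fun x _ => Commute.one_left x
      · exact fun x _ => Commute.one_right x
      · exact fun x y z _ _ _ h1 h2 => h1.mul_left h2
      · exact fun y z x _ _ _ h1 h2 => h1.mul_right h2
      · exact fun x y _ _ h => h.inv_left
      · exact fun x y _ _ h => h.inv_right
    exact this
  -- orbit cardinalities are constant
  have horb_smul : ∀ (g : G) (x : X),
      Nat.card (MulAction.orbit T (g • x)) = Nat.card (MulAction.orbit T x) := by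
    intro g x
    have himg : (fun z : X => g • z) '' (MulAction.orbit T x) = MulAction.orbit T (g • x) := by
      ext z
      constructor
      · rintro ⟨_, ⟨t, rfl⟩, rfl⟩
        refine ⟨⟨g * (t : G) * g⁻¹, hnorm.conj_mem _ t.2 g⟩, ?_⟩
        show (g * (t : G) * g⁻¹) • (g • x) = g • (t • x)
        rw [smul_smul, inv_mul_cancel_right, Subgroup.smul_def, ← mul_smul]
      · rintro ⟨t, rfl⟩
        refine ⟨(⟨g⁻¹ * (t : G) * g, ?_⟩ : T) • x, ⟨_, rfl⟩, ?_⟩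
        · have := hnorm.conj_mem _ t.2 g⁻¹
          rwa [inv_inv] at this
        · show g • ((g⁻¹ * (t : G) * g) • x) = (t : G) • (g • x)
          rw [smul_smul, smul_smul]
          congr 1
          group
    rw [← himg, Nat.card_image_of_injective (MulAction.injective g)]
  -- X is nonempty
  have hXne : Nonempty X := by
    by_contra h
    have hall : ∀ a : G, a = 1 := fun a => hfaith a (fun x => absurd ⟨x⟩ h)
    have hone : Nat.card G = 1 :=
      Nat.card_eq_one_iff_unique.2 ⟨⟨fun a b => by rw [hall a, hall b]⟩, ⟨1⟩⟩
    rw [hG] at hone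
    have : 9 ≤ s ^ 2 := by nlinarith
    omega
  obtain ⟨x0⟩ := hXne
  set k := Nat.card (MulAction.orbit T x0) with hk
  have horbconst : ∀ x : X, Nat.card (MulAction.orbit T x) = k := by
    intro x
    obtain ⟨g, rfl⟩ := htrans x0 x
    exact horb_smul g x0
  set m := Nat.card (MulAction.orbitRel.Quotient T X) with hm
  -- n = k * m
  have hnkm : n = k * m := by
    rw [← hn, Nat.card_congr (MulAction.selfEquivSigmaOrbits T X)]
    exact sigma_card_const _ k (fun ω => horbconst _)
  -- stabilizer cardinalities
  have hidxOrb : ∀ x : X, (MulAction.stabilizer T x).index = k := by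
    intro x
    show Nat.card (T ⧸ MulAction.stabilizer T x) = k
    rw [← Nat.card_congr (MulAction.orbitEquivQuotientStabilizer T x)]
    exact horbconst x
  have hstabTcard : ∀ x : X, Nat.card (MulAction.stabilizer T x) * k = s * s := by
    intro x
    rw [← hidxOrb x, (MulAction.stabilizer T x).card_mul_index, cardT]
  -- t^k fixes everything, for t in T
  have hpowk : ∀ t : T, ∀ y : X, ((t : G) ^ k) • y = y := by
    intro t y
    haveI hstabnorm : (MulAction.stabilizer T y).Normal := by
      constructor
      intro w hw g
      have hcomm : g * w * g⁻¹ = w := by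
        have h1 : (g : G) * (w : G) = (w : G) * (g : G) := commT _ _ g.2 w.2
        have h2 : g * w = w * g := Subtype.ext h1
        rw [h2, mul_assoc, mul_inv_cancel, mul_one]
      rw [hcomm]
      exact hw
    have h1 : ((t ^ k : T) : T ⧸ MulAction.stabilizer T y) = 1 := by
      have h2 : ((t : T ⧸ MulAction.stabilizer T y)) ^ (MulAction.stabilizer T y).index = 1 := by
        have := pow_card_eq_one' (G := T ⧸ MulAction.stabilizer T y)
          (x := (t : T ⧸ MulAction.stabilizer T y))
        exact this
      rw [hidxOrb y] at h2
      rw [← h2]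
      rfl
    have h3 : t ^ k ∈ MulAction.stabilizer T y := (QuotientGroup.eq_one_iff _).1 h1
    have h4 : (t ^ k : T) • y = y := h3
    rw [Subgroup.smul_def] at h4
    rwa [SubmonoidClass.coe_pow] at h4
  -- s divides k
  have hkpos : 0 < k := by
    haveI : Nonempty (MulAction.orbit T x0) := ⟨⟨x0, MulAction.mem_orbit_self x0⟩⟩
    exact Nat.card_pos
  have hsk : s ∣ k := by
    have huk : u ^ k = 1 := hfaith _ (fun y => hpowk ⟨u, huT⟩ y)
    rw [← hordu]
    exact orderOf_dvd_of_pow_eq_one huk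
  have hk1 : 1 < k := lt_of_lt_of_le (by omega) (Nat.le_of_dvd hkpos hsk)
  have hkdvd : k ∣ s * s := Dvd.intro_left _ (hstabTcard x0)
  -- m > 1
  have hmpos : 0 < m := by
    haveI : Nonempty (MulAction.orbitRel.Quotient T X) := ⟨⟦x0⟧⟩
    exact Nat.card_pos
  have hm1 : 1 < m := by
    rcases Nat.lt_or_ge m 2 with hm2 | hm2
    · exfalso
      have hmeq : m = 1 := by omega
      have hsub : Subsingleton (MulAction.orbitRel.Quotient T X) :=
        (Nat.card_eq_one_iff_unique.1 hmeq).1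
      have htransT : ∀ y : X, y ∈ MulAction.orbit T x0 := by
        intro y
        have heq : (⟦y⟧ : MulAction.orbitRel.Quotient T X) = ⟦x0⟧ := Subsingleton.elim _ _
        have := Quotient.exact heq
        exact this
      have hstab1 : MulAction.stabilizer T x0 = ⊥ := by
        rw [Subgroup.eq_bot_iff_forall]
        intro w hw
        have hfix : ∀ y : X, (w : G) • y = y := by
          intro y
          obtain ⟨t, rfl⟩ := htransT y
          have hc := commT (w : G) (t : G) w.2 t.2
          show (w : G) • ((t : T) • x0) = (t : T) • x0
          rw [Subgroup.smul_def, smul_smul, hc, ← smul_smul]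
          have hwx : (w : G) • x0 = x0 := hw
          rw [hwx]
        have : (w : G) = 1 := hfaith _ hfix
        exact Subtype.ext this
      have hcard1 : Nat.card (MulAction.stabilizer T x0) = 1 := by
        rw [hstab1]
        simp
      have hks : k = s * s := by
        have := hstabTcard x0
        rw [hcard1, one_mul] at this
        exact this
      apply hns
      rw [hnkm, hmeq, mul_one, hks, pow_two]
    · omega
  -- m * s^2 divides card G
  have horbG : MulAction.orbit G x0 = Set.univ := by
    apply Set.eq_univ_of_forall
    intro y
    obtain ⟨g, hg⟩ := htrans x0 y
    exact ⟨g, hg⟩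
  have hidxG : (MulAction.stabilizer G x0).index = n := by
    show Nat.card (G ⧸ MulAction.stabilizer G x0) = n
    rw [← Nat.card_congr (MulAction.orbitEquivQuotientStabilizer G x0), horbG, ← hn]
    exact Nat.card_congr (Equiv.Set.univ X)
  have hGeq : Nat.card (MulAction.stabilizer G x0) * n = 8 * s ^ 2 := by
    rw [← hidxG, (MulAction.stabilizer G x0).card_mul_index, hG]
  have hdvd_stab : Nat.card (MulAction.stabilizer T x0) ∣
      Nat.card (MulAction.stabilizer G x0) := by
    have hle : Subgroup.map T.subtype (MulAction.stabilizer T x0) ≤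
        MulAction.stabilizer G x0 := by
      rintro _ ⟨w, hw, rfl⟩
      show (T.subtype w) • x0 = x0
      have : (w : T) • x0 = x0 := hw
      rwa [Subgroup.smul_def] at this
    have hcardeq : Nat.card (MulAction.stabilizer T x0) =
        Nat.card (Subgroup.map T.subtype (MulAction.stabilizer T x0)) :=
      Nat.card_congr ((MulAction.stabilizer T x0).equivMapOfInjective _
        T.subtype_injective).toEquiv
    rw [hcardeq]
    exact Subgroup.card_dvd_of_le hle
  obtain ⟨c, hc⟩ := hdvd_stab
  have hm8 : m ∣ 8 := by
    have h1 := hstabTcard x0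
    have h2 := hGeq
    rw [hc, hnkm] at h2
    have h3 : (Nat.card (MulAction.stabilizer T x0) * k) * (m * c) = (s * s) * 8 := by
      calc (Nat.card (MulAction.stabilizer T x0) * k) * (m * c)
          = Nat.card (MulAction.stabilizer T x0) * c * (k * m) := by ring
        _ = 8 * s ^ 2 := h2
        _ = (s * s) * 8 := by ring
    rw [h1] at h3
    have hsspos : 0 < s * s := Nat.mul_pos hs0 hs0
    have h4 : m * c = 8 := Nat.eq_of_mul_eq_mul_left hsspos h3
    exact ⟨c, h4.symm⟩
  -- assemble
  have hsb : k = s * (k / s) := (Nat.mul_div_cancel' hsk).symm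
  have hbpos : 0 < k / s := Nat.div_pos (Nat.le_of_dvd hkpos hsk) hs0
  have hbdvd : (k / s) ∣ s := by
    have h5 : s * (k / s) ∣ s * s := by
      rw [← hsb]
      exact hkdvd
    exact (mul_dvd_mul_iff_left hs0.ne').1 h5
  refine ⟨k, m, s, k / s, hk1, hm1, horbconst, rfl, hnkm, hs0, hbpos, ?_, hsb, ?_⟩
  · exact Nat.dvd_antisymm (Nat.dvd_lcm_left s _) (Nat.lcm_dvd dvd_rfl hbdvd)
  · rw [hG]
    exact Nat.mul_dvd_mul_right hm8 (s ^ 2)
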